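/- For every real q with 0 ≤ q ≤ 1 − 1/b where b > 1, the infinite product ∏_{m=1}^∞ (1 − q^m) is at least e^{(π²/6)(1−b)}. -/

import Mathlib

open Real

theorem stmt4 (b : ℝ) (hb : 1 < b) (q : ℝ) (hq0 : 0 ≤ q) (hq : q ≤ 1 - 1 / b) :
    Real.exp ((π ^ 2 / 6) * (1 - b)) ≤ ∏' m : ℕ, (1 - q ^ (m + 1)) := by
  have hb0 : (0:ℝ) < b := lt_trans one_pos hb
  rcases eq_or_lt_of_le hq0 with hq0' | hq0'
  · -- q = 0
    have : ∀ m : ℕ, (1 : ℝ) - q ^ (m + 1) = 1 := by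
      intro m; rw [← hq0']; simp
    simp only [this, tprod_one]
    have h0 : (0:ℝ) ≤ π ^ 2 / 6 := by positivity
    calc Real.exp (π ^ 2 / 6 * (1 - b)) ≤ Real.exp 0 :=
          Real.exp_le_exp.mpr (by nlinarith)
    _ = 1 := Real.exp_zero
  have hq1 : q < 1 := lt_of_le_of_lt hq (by
    have : 0 < 1 / b := by positivity
    linarith)
  have h1q : 0 < 1 - q := by linarith
  -- q/(1-q) ≤ b - 1
  have hratio : q / (1 - q) ≤ b - 1 := by
    rw [div_le_iff₀ h1q]
    have h1b : 1 / b ≤ 1 - q := by linarith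
    have : (b - 1) * (1 / b) ≤ (b - 1) * (1 - q) :=
      mul_le_mul_of_nonneg_left h1b (by linarith)
    calc q = 1 - 1/b - (1 - 1/b - q) := by ring
    _ ≤ 1 - 1/b := by linarith
    _ = (b-1) * (1/b) := by field_simp
    _ ≤ (b-1) * (1-q) := this
  -- factors
  have hfac : ∀ m : ℕ, 0 < 1 - q ^ (m + 1) := by
    intro m
    have : q ^ (m+1) < 1 := pow_lt_one₀ hq0 hq1 (Nat.succ_ne_zero m)
    linarith
  set L : ℕ → ℝ := fun m => -Real.log (1 - q ^ (m + 1)) with hLdef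
  have habs : ∀ m : ℕ, |q ^ (m+1)| < 1 := by
    intro m
    rw [abs_of_nonneg (pow_nonneg hq0 _)]
    exact pow_lt_one₀ hq0 hq1 (Nat.succ_ne_zero m)
  have hL : ∀ m : ℕ, HasSum (fun s : ℕ => q ^ ((m+1)*(s+1)) / (s+1)) (L m) := by
    intro m
    have := hasSum_pow_div_log_of_abs_lt_one (habs m)
    convert this using 2 with s
    rw [pow_mul]
  have hLnn : ∀ m, 0 ≤ L m := by
    intro m
    apply (hL m).nonneg
    intro s
    positivity
  -- L m ≤ q^(m+1)/(1-q)
  have hLle : ∀ m : ℕ, L m ≤ q ^ (m+1) / (1 - q) := by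
    intro m
    have h := Real.one_sub_inv_le_log_of_pos (hfac m)
    have hle : L m ≤ (1 - q ^ (m+1))⁻¹ - 1 := by
      simp only [hLdef]; linarith
    refine hle.trans ?_
    have h1 : (1 - q ^ (m+1))⁻¹ - 1 = q ^ (m+1) / (1 - q ^ (m+1)) := by
      rw [inv_eq_one_div, div_sub_one (hfac m).ne']
      ring_nf
    rw [h1]
    apply div_le_div_of_nonneg_left (pow_nonneg hq0 _) h1q
    have : q ^ (m+1) ≤ q := by
      calc q ^ (m+1) ≤ q ^ 1 := pow_le_pow_of_le_one hq0 hq1.le (by omega)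
      _ = q := pow_one q
    linarith
  have hLsum : Summable L := by
    apply Summable.of_nonneg_of_le hLnn hLle
    apply Summable.div_const
    exact (summable_geometric_of_lt_one hq0 hq1).comp_injective (add_left_injective 1)
  -- double family
  set g : ℕ → ℕ → ℝ := fun m s => q ^ ((m+1)*(s+1)) / (s+1) with hgdef
  have hgnn : ∀ m s, 0 ≤ g m s := by intro m s; positivity
  -- for fixed s, sum over m
  have hcol : ∀ s : ℕ, HasSum (fun m : ℕ => g m s)
      (q ^ (s+1) / (1 - q ^ (s+1)) / (s+1)) := by
    intro s
    have hg2 : HasSum (fun m : ℕ => (q ^ (s+1)) ^ m)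
        ((1 - q ^ (s+1))⁻¹) :=
      hasSum_geometric_of_lt_one (pow_nonneg hq0 _)
        (pow_lt_one₀ hq0 hq1 (Nat.succ_ne_zero s))
    have := (hg2.mul_left (q ^ (s+1))).div_const ((s:ℝ)+1)
    convert this using 2 with m
    · rfl
    simp only [hgdef]
    rw [← pow_succ', ← pow_mul, mul_comm (s+1) (m+1)]
    exact div_eq_mul_inv _ _
  -- summability over product
  have hgsum : Summable (Function.uncurry fun m s => g m s) := by
    apply (summable_prod_of_nonneg ?_).mpr
    constructor
    · intro m; exact (hL m).summable
    · apply hLsum.congr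
      intro m
      exact ((hL m).tsum_eq).symm
    · rintro ⟨m, s⟩; exact hgnn m s
  -- Fubini
  have hswap : ∑' m, L m = ∑' (s) (m), g m s := by
    rw [Summable.tsum_comm' hgsum (fun m => (hL m).summable) (fun s => (hcol s).summable)]
    exact tsum_congr fun m => ((hL m).tsum_eq).symm
  -- bound each column sum
  have hcolle : ∀ s : ℕ, (∑' m, g m s) ≤ q / (1 - q) * (1 / ((s:ℝ)+1)^2) := by
    intro s
    rw [(hcol s).tsum_eq]
    have hqs : 0 < q ^ s := pow_pos hq0' s
    have hs1 : (0:ℝ) < (s:ℝ) + 1 := by positivity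
    have hkey : ((s:ℝ)+1) * q ^ s * (1 - q) ≤ 1 - q ^ (s+1) := by
      have hgeom : (1 - q) * ∑ i ∈ Finset.range (s+1), q ^ i = 1 - q ^ (s+1) := by
        have := geom_sum_mul q (s+1)
        nlinarith [this]
      rw [← hgeom]
      have hsumge : ((s:ℝ)+1) * q ^ s ≤ ∑ i ∈ Finset.range (s+1), q ^ i := by
        calc ((s:ℝ)+1) * q ^ s = ∑ _i ∈ Finset.range (s+1), q ^ s := by
              rw [Finset.sum_const, Finset.card_range]; push_cast; ring
        _ ≤ ∑ i ∈ Finset.range (s+1), q ^ i := by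
            apply Finset.sum_le_sum
            intro i hi
            exact pow_le_pow_of_le_one hq0 hq1.le (by
              simp only [Finset.mem_range] at hi; omega)
      nlinarith
    have hpos : 0 < 1 - q ^ (s+1) := hfac s
    rw [div_div]
    rw [div_le_iff₀ (by positivity)]
    have hq' : q / (1 - q) * (1 / ((s:ℝ)+1)^2) * ((1 - q^(s+1)) * ((s:ℝ)+1))
        = q * (1 - q^(s+1)) / ((1-q) * ((s:ℝ)+1)) := by
      field_simp
    rw [hq']
    rw [le_div_iff₀ (by positivity)]
    calc q ^ (s+1) * ((1-q) * ((s:ℝ)+1)) = q * (((s:ℝ)+1) * q^s * (1-q)) := by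
          rw [pow_succ']; ring
    _ ≤ q * (1 - q^(s+1)) := by
        apply mul_le_mul_of_nonneg_left hkey hq0
  -- sum the bound
  have hzeta : HasSum (fun s : ℕ => q / (1-q) * (1 / ((s:ℝ)+1)^2))
      (q / (1-q) * (π^2/6)) := by
    apply HasSum.mul_left
    have h0 : HasSum (fun n : ℕ => 1 / ((n:ℝ))^2) (π^2/6) := hasSum_zeta_two
    have h1 : HasSum (fun n : ℕ => 1 / ((n+1:ℕ):ℝ)^2) (π^2/6) :=
      (hasSum_nat_add_iff (f := fun n : ℕ => 1 / ((n:ℝ))^2) (g := π^2/6) 1).mpr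
        (by simpa using h0)
    convert h1 using 2 with s
    · rfl
    push_cast; ring_nf
  have hfinal : ∑' m, L m ≤ (π^2/6) * (b - 1) := by
    rw [hswap]
    calc (∑' (s) (m), g m s) ≤ ∑' s : ℕ, q / (1-q) * (1 / ((s:ℝ)+1)^2) := by
          apply Summable.tsum_le_tsum hcolle ?_ hzeta.summable
          apply Summable.of_nonneg_of_le ?_ hcolle hzeta.summable
          intro s
          exact tsum_nonneg (fun m => hgnn m s)
    _ = q / (1-q) * (π^2/6) := hzeta.tsum_eq
    _ ≤ (b-1) * (π^2/6) := by
        apply mul_le_mul_of_nonneg_right hratio (by positivity)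
    _ = (π^2/6) * (b - 1) := by ring
  -- convert tprod to exp of tsum
  have hlogsum : Summable fun m : ℕ => Real.log (1 - q ^ (m+1)) := by
    have : (fun m : ℕ => Real.log (1 - q ^ (m+1))) = fun m => -(L m) := by
      funext m; simp [hLdef]
    rw [this]
    exact hLsum.neg
  have hprod : (∏' m : ℕ, (1 - q ^ (m + 1)))
      = Real.exp (∑' m : ℕ, Real.log (1 - q ^ (m+1))) := by
    exact (Real.rexp_tsum_eq_tprod (fun m => hfac m) hlogsum).symm
  rw [hprod]
  apply Real.exp_le_exp.mpr
  have : ∑' m : ℕ, Real.log (1 - q ^ (m+1)) = -(∑' m, L m) := by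
    rw [← tsum_neg]
    apply tsum_congr
    intro m; simp [hLdef]
  rw [this]
  linarith
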